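/- Let ℂ be a positive definite symmetric 3×3 real matrix, 𝔻 the symmetric matrix with 𝔻₁₂ = 𝔻₂₁ = 1/2, 𝔻₃₃ = −1/4 and other entries 0, and let α⁺ = sup{α > 0 : ℂ + α𝔻 ⪰ 0} and α⁻ = sup{α > 0 : ℂ − α𝔻 ⪰ 0}. Fix z ∈ ℝ and ξ ∈ ℝ³. Then the function g_ξ(m) = ℂm·m − m·ξ + α⁺(𝔻m·m − z)⁺ + α⁻(𝔻m·m − z)⁻ attains its minimum over ℝ³, and there exists a minimizer ξ* satisfying 𝔻ξ*·ξ* = z. -/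

import Mathlib

open Matrix

noncomputable def Dmat : Matrix (Fin 3) (Fin 3) ℝ :=
  !![0, 1/2, 0; 1/2, 0, 0; 0, 0, -(1/4)]

lemma Q_expand (M : Matrix (Fin 3) (Fin 3) ℝ) (m v : Fin 3 → ℝ) (t : ℝ) :
    M.mulVec (m + t • v) ⬝ᵥ (m + t • v)
      = M.mulVec m ⬝ᵥ m + t * (M.mulVec m ⬝ᵥ v + M.mulVec v ⬝ᵥ m)
        + t^2 * (M.mulVec v ⬝ᵥ v) := by
  simp [Matrix.mulVec_add, Matrix.mulVec_smul, dotProduct_add, add_dotProduct,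
    smul_dotProduct, dotProduct_smul, smul_eq_mul]
  ring

lemma Q_smul_vec (M : Matrix (Fin 3) (Fin 3) ℝ) (m : Fin 3 → ℝ) (c : ℝ) :
    M.mulVec (c • m) ⬝ᵥ (c • m) = c^2 * (M.mulVec m ⬝ᵥ m) := by
  simp [Matrix.mulVec_smul, smul_dotProduct, dotProduct_smul, smul_eq_mul]; ring

lemma Q_add_mat (A B : Matrix (Fin 3) (Fin 3) ℝ) (m : Fin 3 → ℝ) :
    (A + B).mulVec m ⬝ᵥ m = A.mulVec m ⬝ᵥ m + B.mulVec m ⬝ᵥ m := by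
  simp [Matrix.add_mulVec, add_dotProduct]

lemma Q_smul_mat (A : Matrix (Fin 3) (Fin 3) ℝ) (c : ℝ) (m : Fin 3 → ℝ) :
    (c • A).mulVec m ⬝ᵥ m = c * (A.mulVec m ⬝ᵥ m) := by
  simp [Matrix.smul_mulVec, smul_dotProduct, smul_eq_mul]

lemma Q_neg_mat (A : Matrix (Fin 3) (Fin 3) ℝ) (m : Fin 3 → ℝ) :
    (-A).mulVec m ⬝ᵥ m = -(A.mulVec m ⬝ᵥ m) := by
  simp [Matrix.neg_mulVec, neg_dotProduct]

lemma QD_eq (m : Fin 3 → ℝ) :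
    Dmat.mulVec m ⬝ᵥ m = m 0 * m 1 - (m 2)^2 / 4 := by
  simp [Dmat, Matrix.mulVec, dotProduct, Fin.sum_univ_three, Matrix.vecHead, Matrix.vecTail]
  ring

lemma QD_bound (m : Fin 3 → ℝ) : |Dmat.mulVec m ⬝ᵥ m| ≤ 2 * ‖m‖^2 := by
  rw [QD_eq]
  have h0 := norm_le_pi_norm m 0
  have h1 := norm_le_pi_norm m 1
  have h2 := norm_le_pi_norm m 2
  simp only [Real.norm_eq_abs] at h0 h1 h2
  have a0 := abs_nonneg (m 0); have a1 := abs_nonneg (m 1); have a2 := abs_nonneg (m 2)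
  rw [abs_le]
  have hp : |m 0| * |m 1| ≤ ‖m‖ * ‖m‖ := mul_le_mul h0 h1 a1 (norm_nonneg m)
  have hq : |m 2| * |m 2| ≤ ‖m‖ * ‖m‖ := mul_le_mul h2 h2 a2 (norm_nonneg m)
  constructor <;> nlinarith [abs_mul_abs_self (m 2), neg_abs_le (m 0 * m 1),
    le_abs_self (m 0 * m 1), abs_mul (m 0) (m 1), sq_nonneg (m 2)]

lemma cont_Q (M : Matrix (Fin 3) (Fin 3) ℝ) :
    Continuous (fun m : Fin 3 → ℝ => M.mulVec m ⬝ᵥ m) := by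
  simp only [Matrix.mulVec, dotProduct]
  fun_prop

lemma Dmat_symm : Dmatᵀ = Dmat := by
  ext i j; fin_cases i <;> fin_cases j <;> simp [Dmat, Matrix.vecHead, Matrix.vecTail]

lemma posdef_lower (M : Matrix (Fin 3) (Fin 3) ℝ)
    (h : ∀ m : Fin 3 → ℝ, m ≠ 0 → 0 < M.mulVec m ⬝ᵥ m) :
    ∃ δ > 0, ∀ m : Fin 3 → ℝ, δ * ‖m‖^2 ≤ M.mulVec m ⬝ᵥ m := by
  have hsph : (Metric.sphere (0 : Fin 3 → ℝ) 1).Nonempty := by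
    refine ⟨fun _ => 1, ?_⟩
    simp [Metric.mem_sphere, dist_eq_norm]
  obtain ⟨v, hv, hmin⟩ := (isCompact_sphere (0 : Fin 3 → ℝ) 1).exists_isMinOn hsph
    ((cont_Q M).continuousOn)
  have hvn : ‖v‖ = 1 := by simpa [dist_eq_norm] using hv
  have hvne : v ≠ 0 := by intro h0; rw [h0] at hvn; simp at hvn
  refine ⟨M.mulVec v ⬝ᵥ v, h v hvne, fun m => ?_⟩
  rcases eq_or_ne m 0 with rfl | hm
  · simp
  · have hnm : (0:ℝ) < ‖m‖ := norm_pos_iff.2 hm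
    have hmem : ‖m‖⁻¹ • m ∈ Metric.sphere (0 : Fin 3 → ℝ) 1 := by
      simp [norm_smul, abs_of_pos (inv_pos.2 hnm), inv_mul_cancel₀ hnm.ne']
    have hle : M.mulVec v ⬝ᵥ v ≤ M.mulVec (‖m‖⁻¹ • m) ⬝ᵥ (‖m‖⁻¹ • m) := hmin hmem
    have hQ : M.mulVec (‖m‖⁻¹ • m) ⬝ᵥ (‖m‖⁻¹ • m) = (‖m‖⁻¹)^2 * (M.mulVec m ⬝ᵥ m) :=
      Q_smul_vec M m _
    rw [hQ] at hle
    have h2 : (0:ℝ) < ‖m‖^2 := by positivity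
    calc (M.mulVec v ⬝ᵥ v) * ‖m‖^2 ≤ ((‖m‖⁻¹)^2 * (M.mulVec m ⬝ᵥ m)) * ‖m‖^2 := by
          nlinarith [hle]
      _ = M.mulVec m ⬝ᵥ m := by field_simp

lemma dot_bound (m ξ : Fin 3 → ℝ) : |m ⬝ᵥ ξ| ≤ ‖m‖ * (∑ i, |ξ i|) := by
  calc |m ⬝ᵥ ξ| ≤ ∑ i, |m i * ξ i| := by
        simpa [dotProduct] using Finset.abs_sum_le_sum_abs (fun i => m i * ξ i) Finset.univ
    _ ≤ ∑ i, ‖m‖ * |ξ i| := by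
        refine Finset.sum_le_sum fun i _ => ?_
        rw [abs_mul]
        exact mul_le_mul_of_nonneg_right (by simpa using norm_le_pi_norm m i) (abs_nonneg _)
    _ = ‖m‖ * ∑ i, |ξ i| := by rw [Finset.mul_sum]

lemma psd_iff (M : Matrix (Fin 3) (Fin 3) ℝ) (hM : Mᵀ = M) :
    M.PosSemidef ↔ ∀ x : Fin 3 → ℝ, 0 ≤ M.mulVec x ⬝ᵥ x := by
  constructor
  · intro h x
    have := (Matrix.posSemidef_iff_dotProduct_mulVec.1 h).2 x
    simpa [dotProduct_comm] using this
  · intro h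
    refine Matrix.posSemidef_iff_dotProduct_mulVec.2 ⟨?_, fun x => by simpa [dotProduct_comm] using h x⟩
    unfold Matrix.IsHermitian
    rw [Matrix.conjTranspose]
    exact (Matrix.conjTranspose_eq_transpose_of_trivial M).trans hM

lemma sup_props (C : Matrix (Fin 3) (Fin 3) ℝ) (hCs : Cᵀ = C)
    (hC : ∀ m, m ≠ 0 → 0 < C.mulVec m ⬝ᵥ m)
    (E : Matrix (Fin 3) (Fin 3) ℝ) (hEs : Eᵀ = E)
    (hElb : ∀ m, |E.mulVec m ⬝ᵥ m| ≤ 2 * ‖m‖^2)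
    (e : Fin 3 → ℝ) (he : E.mulVec e ⬝ᵥ e < 0) :
    0 < sSup {α : ℝ | 0 < α ∧ (C + α • E).PosSemidef} ∧
    (∀ m, 0 ≤ (C + sSup {α : ℝ | 0 < α ∧ (C + α • E).PosSemidef} • E).mulVec m ⬝ᵥ m) ∧
    ∃ v, v ≠ 0 ∧
      (C + sSup {α : ℝ | 0 < α ∧ (C + α • E).PosSemidef} • E).mulVec v ⬝ᵥ v = 0 := by
  set S := {α : ℝ | 0 < α ∧ (C + α • E).PosSemidef} with hS
  have hsymm : ∀ α : ℝ, (C + α • E)ᵀ = C + α • E := by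
    intro α
    rw [Matrix.transpose_add, Matrix.transpose_smul, hCs, hEs]
  have hQ : ∀ (α : ℝ) m, (C + α • E).mulVec m ⬝ᵥ m
      = C.mulVec m ⬝ᵥ m + α * (E.mulVec m ⬝ᵥ m) := by
    intro α m; rw [Q_add_mat, Q_smul_mat]
  have hmem : ∀ α : ℝ, 0 < α → (∀ m, 0 ≤ C.mulVec m ⬝ᵥ m + α * (E.mulVec m ⬝ᵥ m)) → α ∈ S := by
    intro α hα h
    exact ⟨hα, (psd_iff _ (hsymm α)).2 (fun m => by rw [hQ]; exact h m)⟩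
  obtain ⟨δ, hδ, hδle⟩ := posdef_lower C hC
  have hne : (δ/4) ∈ S := by
    refine hmem _ (by linarith) fun m => ?_
    have h1 := hδle m
    have h2 := (abs_le.1 (hElb m)).1
    nlinarith [sq_nonneg ‖m‖]
  have hCe : 0 < C.mulVec e ⬝ᵥ e := by
    apply hC; intro h0; rw [h0] at he; simp at he
  have hbdd : BddAbove S := by
    refine ⟨(C.mulVec e ⬝ᵥ e) / (-(E.mulVec e ⬝ᵥ e)), fun α hα => ?_⟩
    have h2 := (psd_iff _ (hsymm α)).1 hα.2 e
    rw [hQ] at h2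
    rw [le_div_iff₀ (by linarith)]
    nlinarith
  set α₀ := sSup S with hα₀
  have hpos : 0 < α₀ := lt_of_lt_of_le (by linarith) (le_csSup hbdd hne)
  have hpsd : ∀ m, 0 ≤ (C + α₀ • E).mulVec m ⬝ᵥ m := by
    intro m
    rw [hQ]
    set d := E.mulVec m ⬝ᵥ m with hd
    rcases le_or_gt 0 d with hd0 | hd0
    · have h1 := (psd_iff _ (hsymm (δ/4))).1 hne.2 m
      rw [hQ] at h1
      have h2 : (δ/4) ≤ α₀ := le_csSup hbdd hne
      nlinarith
    · by_contra hcon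
      push_neg at hcon
      set ε := (C.mulVec m ⬝ᵥ m + α₀ * d) / d with hε
      have hεpos : 0 < ε := div_pos_of_neg_of_neg hcon hd0
      obtain ⟨β, hβS, hβgt⟩ := exists_lt_of_lt_csSup ⟨_, hne⟩ (by linarith : α₀ - ε < α₀)
      have h1 := (psd_iff _ (hsymm β)).1 hβS.2 m
      rw [hQ, ← hd] at h1
      have hεd : ε * d = C.mulVec m ⬝ᵥ m + α₀ * d := by
        rw [hε, div_mul_cancel₀ _ (ne_of_lt hd0)]
      nlinarith
  refine ⟨hpos, hpsd, ?_⟩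
  by_contra hcon
  push_neg at hcon
  have hpd : ∀ v, v ≠ 0 → 0 < (C + α₀ • E).mulVec v ⬝ᵥ v := by
    intro v hv
    exact lt_of_le_of_ne (hpsd v) (Ne.symm (hcon v hv))
  obtain ⟨δ', hδ', hδ'le⟩ := posdef_lower _ hpd
  have hnew : (α₀ + δ'/2) ∈ S := by
    refine hmem _ (by linarith) fun m => ?_
    have h1 := hδ'le m
    rw [hQ] at h1
    have h2 := (abs_le.1 (hElb m)).1
    nlinarith [sq_nonneg ‖m‖]
  have := le_csSup hbdd hnew
  linarith

lemma cross_zero (M : Matrix (Fin 3) (Fin 3) ℝ)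
    (hpsd : ∀ m, 0 ≤ M.mulVec m ⬝ᵥ m) (v : Fin 3 → ℝ)
    (hv : M.mulVec v ⬝ᵥ v = 0) (m : Fin 3 → ℝ) :
    M.mulVec m ⬝ᵥ v + M.mulVec v ⬝ᵥ m = 0 := by
  set b := M.mulVec m ⬝ᵥ v + M.mulVec v ⬝ᵥ m with hb
  by_contra hbne
  have key : ∀ t : ℝ, 0 ≤ M.mulVec m ⬝ᵥ m + t * b := by
    intro t
    have := hpsd (m + t • v)
    rw [Q_expand, hv, ← hb] at this
    linarith
  have := key ((-(M.mulVec m ⬝ᵥ m) - 1) / b)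
  rw [div_mul_cancel₀ _ hbne] at this
  linarith

lemma quad_root (a b c w : ℝ) (ha : a ≠ 0) (hac : a * c < 0) :
    ∃ t : ℝ, a * t^2 + b * t + c = 0 ∧ 0 ≤ t * w := by
  set disc := b^2 - 4*a*c with hdisc
  have hdpos : b^2 < disc := by nlinarith
  set s := Real.sqrt disc with hs
  have hs2 : s^2 = disc := Real.sq_sqrt (by nlinarith)
  have hsnn : 0 ≤ s := Real.sqrt_nonneg _
  have hn1 : -b - s < 0 := by nlinarith
  have hn2 : 0 < -b + s := by nlinarith
  have hroot : ∀ n : ℝ, n^2 + 2*b*n + 4*a*c = 0 →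
      a * (n/(2*a))^2 + b * (n/(2*a)) + c = 0 := by
    intro n hn
    field_simp
    nlinarith [hn]
  have hr1 : a * ((-b-s)/(2*a))^2 + b * ((-b-s)/(2*a)) + c = 0 := by
    apply hroot; nlinarith
  have hr2 : a * ((-b+s)/(2*a))^2 + b * ((-b+s)/(2*a)) + c = 0 := by
    apply hroot; nlinarith
  rcases lt_or_gt_of_ne ha with haneg | hapos
  · have hp : 0 < (-b-s)/(2*a) := div_pos_of_neg_of_neg hn1 (by linarith)
    have hn : (-b+s)/(2*a) < 0 := div_neg_of_pos_of_neg hn2 (by linarith)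
    rcases le_or_gt 0 w with hw | hw
    · exact ⟨_, hr1, mul_nonneg hp.le hw⟩
    · exact ⟨_, hr2, le_of_lt (mul_pos_of_neg_of_neg hn hw)⟩
  · have hp : 0 < (-b+s)/(2*a) := div_pos hn2 (by linarith)
    have hn : (-b-s)/(2*a) < 0 := div_neg_of_neg_of_pos hn1 (by linarith)
    rcases le_or_gt 0 w with hw | hw
    · exact ⟨_, hr2, mul_nonneg hp.le hw⟩
    · exact ⟨_, hr1, le_of_lt (mul_pos_of_neg_of_neg hn hw)⟩

set_option maxHeartbeats 2000000

theorem stmt_6 (C : Matrix (Fin 3) (Fin 3) ℝ) (hCs : Cᵀ = C)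
    (hC : ∀ m : Fin 3 → ℝ, m ≠ 0 → 0 < C.mulVec m ⬝ᵥ m)
    (z : ℝ) (ξ : Fin 3 → ℝ) (αp αm : ℝ)
    (hαp : αp = sSup {α : ℝ | 0 < α ∧ (C + α • Dmat).PosSemidef})
    (hαm : αm = sSup {α : ℝ | 0 < α ∧ (C - α • Dmat).PosSemidef}) :
    ∃ ξs : Fin 3 → ℝ,
      (∀ m : Fin 3 → ℝ,
        C.mulVec ξs ⬝ᵥ ξs - ξs ⬝ᵥ ξ + αp * max (Dmat.mulVec ξs ⬝ᵥ ξs - z) 0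
            + αm * max (-(Dmat.mulVec ξs ⬝ᵥ ξs - z)) 0
          ≤ C.mulVec m ⬝ᵥ m - m ⬝ᵥ ξ + αp * max (Dmat.mulVec m ⬝ᵥ m - z) 0
            + αm * max (-(Dmat.mulVec m ⬝ᵥ m - z)) 0) ∧
      Dmat.mulVec ξs ⬝ᵥ ξs = z := by
  have hDneg_symm : (-Dmat)ᵀ = -Dmat := by rw [Matrix.transpose_neg, Dmat_symm]
  have hDneg_bound : ∀ m, |(-Dmat).mulVec m ⬝ᵥ m| ≤ 2 * ‖m‖^2 := by
    intro m; rw [Q_neg_mat, abs_neg]; exact QD_bound m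
  have hep : Dmat.mulVec ![(0:ℝ),0,1] ⬝ᵥ ![(0:ℝ),0,1] < 0 := by
    rw [QD_eq]; norm_num [Matrix.cons_val_two, Matrix.vecHead, Matrix.vecTail]
  have hem : (-Dmat).mulVec ![(1:ℝ),1,0] ⬝ᵥ ![(1:ℝ),1,0] < 0 := by
    rw [Q_neg_mat, QD_eq]; norm_num [Matrix.cons_val_two, Matrix.vecHead, Matrix.vecTail]
  obtain ⟨hαp_pos, hPp, vp, hvp_ne, hvp0⟩ :=
    sup_props C hCs hC Dmat Dmat_symm QD_bound _ hep
  rw [← hαp] at hαp_pos hPp hvp0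
  have hsetm : {α : ℝ | 0 < α ∧ (C - α • Dmat).PosSemidef}
      = {α : ℝ | 0 < α ∧ (C + α • (-Dmat)).PosSemidef} := by
    ext α; simp only [Set.mem_setOf_eq, smul_neg, ← sub_eq_add_neg]
  obtain ⟨hαm_pos, hPm, vm, hvm_ne, hvm0⟩ :=
    sup_props C hCs hC (-Dmat) hDneg_symm hDneg_bound _ hem
  rw [← hsetm, ← hαm] at hαm_pos hPm hvm0
  simp only [smul_neg, ← sub_eq_add_neg] at hPm hvm0
  -- abbreviations
  set g : (Fin 3 → ℝ) → ℝ := fun m =>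
    C.mulVec m ⬝ᵥ m - m ⬝ᵥ ξ + αp * max (Dmat.mulVec m ⬝ᵥ m - z) 0
      + αm * max (-(Dmat.mulVec m ⬝ᵥ m - z)) 0 with hg
  clear_value g
  -- g has a global minimizer
  have hpen : ∀ m, 0 ≤ αp * max (Dmat.mulVec m ⬝ᵥ m - z) 0
      ∧ 0 ≤ αm * max (-(Dmat.mulVec m ⬝ᵥ m - z)) 0 :=
    fun m => ⟨mul_nonneg hαp_pos.le (le_max_right _ _),
      mul_nonneg hαm_pos.le (le_max_right _ _)⟩
  obtain ⟨δ, hδ, hδle⟩ := posdef_lower C hC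
  set K := ∑ i : Fin 3, |ξ i| with hK
  have hKnn : 0 ≤ K := Finset.sum_nonneg fun i _ => abs_nonneg _
  clear_value K
  have hglb : ∀ m, δ * ‖m‖^2 - K * ‖m‖ ≤ g m := by
    intro m
    have h1 := hδle m
    have h2 := (abs_le.1 (dot_bound m ξ)).2
    rw [← hK] at h2
    have h3 := (hpen m).1
    have h4 := (hpen m).2
    rw [hg]; beta_reduce
    nlinarith
  have hgc : Continuous g := by
    rw [hg]
    have hdotc : Continuous fun m : Fin 3 → ℝ => m ⬝ᵥ ξ := by
      simp only [dotProduct]; fun_prop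
    exact (((cont_Q C).sub hdotc).add
      (continuous_const.mul (((cont_Q Dmat).sub continuous_const).max continuous_const))).add
      (continuous_const.mul ((((cont_Q Dmat).sub continuous_const).neg).max continuous_const))
  set R := max 1 ((K + |g 0| + δ)/δ) with hR
  have hR1 : (1:ℝ) ≤ R := le_max_left _ _
  have hRδ : K + |g 0| + δ ≤ δ * R := by
    have h := le_max_right 1 ((K + |g 0| + δ)/δ)
    rw [← hR] at h
    calc K + |g 0| + δ = δ * ((K + |g 0| + δ)/δ) := by field_simp
      _ ≤ δ * R := by nlinarith
  clear_value R
  have houtside : ∀ m, R ≤ ‖m‖ → g 0 ≤ g m := by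
    intro m hm
    have h1 := hglb m
    have h2 : δ * R ≤ δ * ‖m‖ := by nlinarith
    nlinarith [le_abs_self (g 0), abs_nonneg (g 0)]
  obtain ⟨m₀, hm₀mem, hm₀min⟩ := (isCompact_closedBall (0 : Fin 3 → ℝ) R).exists_isMinOn
    ⟨0, Metric.mem_closedBall_self (by linarith)⟩ hgc.continuousOn
  have hglobal : ∀ m, g m₀ ≤ g m := by
    intro m
    rcases le_or_gt ‖m‖ R with hmR | hmR
    · exact hm₀min (by simpa [Metric.mem_closedBall, dist_eq_norm] using hmR)
    · exact le_trans (hm₀min (Metric.mem_closedBall_self (by linarith))) (houtside m hmR.le)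
  -- adjust the minimizer to the constraint set
  rcases lt_trichotomy (Dmat.mulVec m₀ ⬝ᵥ m₀) z with hlt | heqz | hgt
  · -- case Dm₀·m₀ < z
    have hMQ : ∀ m, (C - αm • Dmat).mulVec m ⬝ᵥ m
        = C.mulVec m ⬝ᵥ m - αm * (Dmat.mulVec m ⬝ᵥ m) := by
      intro m
      rw [sub_eq_add_neg, ← smul_neg, Q_add_mat, Q_smul_mat, Q_neg_mat]; ring
    have ha_pos : 0 < Dmat.mulVec vm ⬝ᵥ vm := by
      have h1 := hvm0
      rw [hMQ] at h1
      nlinarith [hC vm hvm_ne]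
    obtain ⟨t, ht, htw⟩ := quad_root (Dmat.mulVec vm ⬝ᵥ vm)
      (Dmat.mulVec m₀ ⬝ᵥ vm + Dmat.mulVec vm ⬝ᵥ m₀)
      (Dmat.mulVec m₀ ⬝ᵥ m₀ - z) (vm ⬝ᵥ ξ) (ne_of_gt ha_pos) (by nlinarith)
    have hQDs : Dmat.mulVec (m₀ + t • vm) ⬝ᵥ (m₀ + t • vm) = z := by
      rw [Q_expand]; linear_combination ht
    refine ⟨m₀ + t • vm, ?_, hQDs⟩
    intro m
    have hcr := cross_zero _ hPm vm hvm0 m₀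
    have hQMs : (C - αm • Dmat).mulVec (m₀ + t • vm) ⬝ᵥ (m₀ + t • vm)
        = (C - αm • Dmat).mulVec m₀ ⬝ᵥ m₀ := by
      rw [Q_expand, hvm0, hcr]; ring
    have hdots : (m₀ + t • vm) ⬝ᵥ ξ = m₀ ⬝ᵥ ξ + t * (vm ⬝ᵥ ξ) := by
      simp [add_dotProduct, smul_dotProduct, smul_eq_mul]
    have hQC : C.mulVec (m₀ + t • vm) ⬝ᵥ (m₀ + t • vm)
        = C.mulVec m₀ ⬝ᵥ m₀ - αm * (Dmat.mulVec m₀ ⬝ᵥ m₀) + αm * z := by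
      have e1 := hMQ (m₀ + t • vm)
      have e2 := hMQ m₀
      rw [hQDs] at e1
      linarith [hQMs]
    have hgm := hglobal m
    rw [hg] at hgm
    beta_reduce at hgm
    rw [hQDs, hQC, hdots]
    have hmax3 : max (Dmat.mulVec m₀ ⬝ᵥ m₀ - z) 0 = 0 := max_eq_right (by linarith)
    have hmax4 : max (-(Dmat.mulVec m₀ ⬝ᵥ m₀ - z)) 0 = -(Dmat.mulVec m₀ ⬝ᵥ m₀ - z) :=
      max_eq_left (by linarith)
    rw [hmax3, hmax4] at hgm
    have hmax1 : max (z - z) 0 = 0 := by simp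
    have hmax2 : max (-(z-z)) 0 = 0 := by simp
    rw [hmax1, hmax2]
    nlinarith [htw]
  · refine ⟨m₀, fun m => ?_, heqz⟩
    have h := hglobal m
    rw [hg] at h
    exact h
  · -- case Dm₀·m₀ > z
    have hMQ : ∀ m, (C + αp • Dmat).mulVec m ⬝ᵥ m
        = C.mulVec m ⬝ᵥ m + αp * (Dmat.mulVec m ⬝ᵥ m) := by
      intro m; rw [Q_add_mat, Q_smul_mat]
    have ha_neg : Dmat.mulVec vp ⬝ᵥ vp < 0 := by
      have h1 := hvp0
      rw [hMQ] at h1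
      nlinarith [hC vp hvp_ne]
    obtain ⟨t, ht, htw⟩ := quad_root (Dmat.mulVec vp ⬝ᵥ vp)
      (Dmat.mulVec m₀ ⬝ᵥ vp + Dmat.mulVec vp ⬝ᵥ m₀)
      (Dmat.mulVec m₀ ⬝ᵥ m₀ - z) (vp ⬝ᵥ ξ) (ne_of_lt ha_neg) (by nlinarith)
    have hQDs : Dmat.mulVec (m₀ + t • vp) ⬝ᵥ (m₀ + t • vp) = z := by
      rw [Q_expand]; linear_combination ht
    refine ⟨m₀ + t • vp, ?_, hQDs⟩
    intro m
    have hcr := cross_zero _ hPp vp hvp0 m₀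
    have hQMs : (C + αp • Dmat).mulVec (m₀ + t • vp) ⬝ᵥ (m₀ + t • vp)
        = (C + αp • Dmat).mulVec m₀ ⬝ᵥ m₀ := by
      rw [Q_expand, hvp0, hcr]; ring
    have hdots : (m₀ + t • vp) ⬝ᵥ ξ = m₀ ⬝ᵥ ξ + t * (vp ⬝ᵥ ξ) := by
      simp [add_dotProduct, smul_dotProduct, smul_eq_mul]
    have hQC : C.mulVec (m₀ + t • vp) ⬝ᵥ (m₀ + t • vp)
        = C.mulVec m₀ ⬝ᵥ m₀ + αp * (Dmat.mulVec m₀ ⬝ᵥ m₀) - αp * z := by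
      have e1 := hMQ (m₀ + t • vp)
      have e2 := hMQ m₀
      rw [hQDs] at e1
      linarith [hQMs]
    have hgm := hglobal m
    rw [hg] at hgm
    beta_reduce at hgm
    rw [hQDs, hQC, hdots]
    have hmax3 : max (Dmat.mulVec m₀ ⬝ᵥ m₀ - z) 0 = Dmat.mulVec m₀ ⬝ᵥ m₀ - z :=
      max_eq_left (by linarith)
    have hmax4 : max (-(Dmat.mulVec m₀ ⬝ᵥ m₀ - z)) 0 = 0 := max_eq_right (by linarith)
    rw [hmax3, hmax4] at hgm
    have hmax1 : max (z - z) 0 = 0 := by simp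
    have hmax2 : max (-(z-z)) 0 = 0 := by simp
    rw [hmax1, hmax2]
    nlinarith [htw]
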